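/- Let Q ⊂ ℤ^d be a finite set and let Λ(Q) := {m − k : m ∈ Q, k ∈ Q}. Let p be a prime and a a natural number with 1 ≤ a < p such that for every nonzero m ∈ Λ(Q) one has m₁ + a·m₂ + ⋯ + a^{d−1}·m_d ≢ 0 (mod p). Define ξ^ν ∈ 𝕋^d by ξ^ν_j := 2π·{ν·a^{j−1}/p} for ν = 1, …, p. Then for every t ∈ 𝒯(Q) and every x ∈ 𝕋^d one has (1/p)·∑_{ν=1}^p t(ξ^ν)·𝒟_Q(x − ξ^ν) = t(x). -/

import Mathlib

open MeasureTheory Real Finset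

noncomputable section

/-- The cube `[0, 2π)^d` representing the torus `𝕋^d`. -/
def torusCube (d : ℕ) : Set (Fin d → ℝ) := Set.univ.pi fun _ => Set.Ico 0 (2 * π)

/-- The trigonometric polynomial with frequencies in `Q` and coefficients `c`. -/
def trigSum {d : ℕ} (Q : Finset (Fin d → ℤ)) (c : (Fin d → ℤ) → ℂ) : (Fin d → ℝ) → ℂ :=
  fun x => ∑ k ∈ Q, c k * Complex.exp (Complex.I * ∑ j, (k j : ℂ) * (x j : ℂ))

/-- `‖f‖_q^q = (2π)^{-d} ∫_{𝕋^d} |f(x)|^q dx`. -/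
def lqNormPow (d : ℕ) (q : ℝ) (f : (Fin d → ℝ) → ℂ) : ℝ :=
  ((2 * π) ^ d)⁻¹ * ∫ x in torusCube d, ‖f x‖ ^ q

open Classical in
/-- The step hyperbolic cross `Q_n`. -/
def hyperCross (d n : ℕ) : Finset (Fin d → ℤ) :=
  (Fintype.piFinset fun _ : Fin d => Finset.Icc (-(2 ^ n : ℤ)) (2 ^ n)).filter
    fun k => ∃ s : Fin d → ℕ, (∑ j, s j) ≤ n ∧
      ∀ j, ((2 ^ s j / 2 : ℕ) : ℤ) ≤ |k j| ∧ |k j| < 2 ^ s j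

/-- sup-norm over the torus. -/
def supNorm (d : ℕ) (f : (Fin d → ℝ) → ℂ) : ℝ := ⨆ x : Fin d → ℝ, ‖f x‖

/-- entropy number `ε_k(A, L_∞)` with centers in `A`. -/
def entropyNum (d : ℕ) (A : Set ((Fin d → ℝ) → ℂ)) (k : ℕ) : ℝ :=
  sInf {ε : ℝ | ∃ y : Fin (2 ^ k) → ((Fin d → ℝ) → ℂ), (∀ j, y j ∈ A) ∧
    ∀ f ∈ A, ∃ j, ∀ x, ‖f x - y j x‖ ≤ ε}

/-- unit `L_q`-ball of `𝒯(Q_n)`. -/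
def trigBall (d : ℕ) (Q : Finset (Fin d → ℤ)) (q : ℝ) : Set ((Fin d → ℝ) → ℂ) :=
  {f | ∃ c : (Fin d → ℤ) → ℂ, f = trigSum Q c ∧ (lqNormPow d q f) ^ (1 / q) ≤ 1}

/-- the points `ξ^ν` built from `a` and `p`. -/
def xiPoint (d p a : ℕ) (ν : ℕ) : Fin d → ℝ :=
  fun j => 2 * π * Int.fract ((ν * a ^ (j : ℕ) : ℝ) / p)

/-- Dirichlet kernel of `Q`. -/
def dirKernel {d : ℕ} (Q : Finset (Fin d → ℤ)) : (Fin d → ℝ) → ℂ :=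
  fun x => ∑ k ∈ Q, Complex.exp (Complex.I * ∑ j, (k j : ℂ) * (x j : ℂ))

/-- `Λ(Q) = {m - k : m ∈ Q, k ∈ Q}`. -/
def diffSet {d : ℕ} (Q : Finset (Fin d → ℤ)) : Finset (Fin d → ℤ) :=
  (Q ×ˢ Q).image fun z => z.1 - z.2

lemma geomsum (p : ℕ) (hp : 0 < p) (S : ℤ) :
    ∑ ν ∈ Finset.Icc 1 p, Complex.exp (2 * π * Complex.I * ν * S / p) =
      if (p : ℤ) ∣ S then (p : ℂ) else 0 := by
  have hpC : (p : ℂ) ≠ 0 := Nat.cast_ne_zero.mpr hp.ne'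
  set ζ : ℂ := Complex.exp (2 * π * Complex.I * S / p) with hζ
  have hterm : ∀ ν : ℕ, Complex.exp (2 * π * Complex.I * ν * S / p) = ζ ^ ν := by
    intro ν
    rw [hζ, ← Complex.exp_nat_mul]
    ring_nf
  have hζp : ζ ^ p = 1 := by
    rw [hζ, ← Complex.exp_nat_mul]
    have : (p : ℂ) * (2 * π * Complex.I * S / p) = (S : ℂ) * (2 * π * Complex.I) := by
      field_simp
    rw [this]
    exact_mod_cast Complex.exp_int_mul_two_pi_mul_I S
  have hsum : ∑ ν ∈ Finset.Icc 1 p, Complex.exp (2 * π * Complex.I * ν * S / p)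
      = ζ * ∑ i ∈ Finset.range p, ζ ^ i := by
    simp only [hterm]
    rw [← Finset.Ico_add_one_right_eq_Icc, Finset.sum_Ico_eq_sum_range]
    simp [pow_succ, pow_add, Finset.mul_sum, mul_comm]
  rw [hsum]
  by_cases hdvd : (p : ℤ) ∣ S
  · rw [if_pos hdvd]
    obtain ⟨t, ht⟩ := hdvd
    have hζ1 : ζ = 1 := by
      rw [hζ]
      have : 2 * (π : ℂ) * Complex.I * S / p = (t : ℂ) * (2 * π * Complex.I) := by
        rw [ht]; push_cast; field_simp
      rw [this]; exact Complex.exp_int_mul_two_pi_mul_I t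
    simp [hζ1]
  · have hζ1 : ζ ≠ 1 := by
      intro h
      rw [hζ, Complex.exp_eq_one_iff] at h
      obtain ⟨n, hn⟩ := h
      apply hdvd
      refine ⟨n, ?_⟩
      have h2 : (2 : ℂ) * π * Complex.I ≠ 0 := by
        simp [Real.pi_ne_zero, Complex.I_ne_zero, Complex.ofReal_ne_zero]
      have hS : (S : ℂ) = (p : ℂ) * n := by
        field_simp at hn
        apply mul_left_cancel₀ h2
        linear_combination (2 * π * Complex.I) * hn
      exact_mod_cast hS
    rw [if_neg hdvd, geom_sum_eq hζ1, hζp]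
    simp

lemma exp_xi (d p a : ℕ) (hp : 0 < p) (ν : ℕ) (mm : Fin d → ℤ) :
    Complex.exp (Complex.I * ∑ j, (mm j : ℂ) * ((xiPoint d p a ν j : ℝ) : ℂ)) =
    Complex.exp (2 * π * Complex.I * ν * ((∑ j, mm j * (a : ℤ) ^ (j : ℕ) : ℤ) : ℂ) / p) := by
  have hpC : (p : ℂ) ≠ 0 := Nat.cast_ne_zero.mpr hp.ne'
  rw [Complex.exp_eq_exp_iff_exists_int]
  refine ⟨-∑ j, mm j * ⌊((ν * a ^ (j : ℕ) : ℝ) / p)⌋, ?_⟩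
  simp only [xiPoint, Int.fract]
  push_cast
  rw [Finset.mul_sum, Finset.mul_sum, Finset.sum_div, neg_mul, Finset.sum_mul,
    ← Finset.sum_neg_distrib, ← Finset.sum_add_distrib]
  apply Finset.sum_congr rfl
  intro j _
  field_simp
  ring

theorem stmt10 (d : ℕ) (hd : 0 < d) (Q : Finset (Fin d → ℤ)) (p : ℕ) (hp : p.Prime)
    (a : ℕ) (ha1 : 1 ≤ a) (hap : a < p)
    (ha : ∀ mm ∈ diffSet Q, mm ≠ 0 → ¬ ((p : ℤ) ∣ ∑ j, mm j * (a : ℤ) ^ (j : ℕ))) :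
    ∀ (c : (Fin d → ℤ) → ℂ) (x : Fin d → ℝ),
      (1 / (p : ℂ)) * ∑ ν ∈ Finset.Icc 1 p,
          trigSum Q c (xiPoint d p a ν) * dirKernel Q (x - xiPoint d p a ν) =
        trigSum Q c x := by
  intro c x
  have hp0 : 0 < p := hp.pos
  have hpC : (p : ℂ) ≠ 0 := Nat.cast_ne_zero.mpr hp0.ne'
  have key : ∀ ν : ℕ,
      trigSum Q c (xiPoint d p a ν) * dirKernel Q (x - xiPoint d p a ν)
        = ∑ k ∈ Q, ∑ m ∈ Q,
            (c k * Complex.exp (Complex.I * ∑ j, (m j : ℂ) * ((x j : ℝ) : ℂ))) *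
              Complex.exp (2 * π * Complex.I * ν *
                ((∑ j, (k - m) j * (a : ℤ) ^ (j : ℕ) : ℤ) : ℂ) / p) := by
    intro ν
    rw [trigSum, dirKernel, Finset.sum_mul_sum]
    refine Finset.sum_congr rfl fun k hk => Finset.sum_congr rfl fun m hm => ?_
    rw [← exp_xi d p a hp0 ν (k - m), mul_assoc, mul_assoc, ← Complex.exp_add,
      ← Complex.exp_add]
    congr 2
    rw [← mul_add, ← mul_add]
    congr 1
    rw [← Finset.sum_add_distrib, ← Finset.sum_add_distrib]
    refine Finset.sum_congr rfl fun j _ => ?_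
    simp only [Pi.sub_apply]
    push_cast
    ring
  simp only [key]
  have swap : ∑ ν ∈ Finset.Icc 1 p, ∑ k ∈ Q, ∑ m ∈ Q,
        (c k * Complex.exp (Complex.I * ∑ j, (m j : ℂ) * ((x j : ℝ) : ℂ))) *
          Complex.exp (2 * π * Complex.I * ν *
            ((∑ j, (k - m) j * (a : ℤ) ^ (j : ℕ) : ℤ) : ℂ) / p)
      = ∑ k ∈ Q, ∑ m ∈ Q, ∑ ν ∈ Finset.Icc 1 p,
        (c k * Complex.exp (Complex.I * ∑ j, (m j : ℂ) * ((x j : ℝ) : ℂ))) *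
          Complex.exp (2 * π * Complex.I * ν *
            ((∑ j, (k - m) j * (a : ℤ) ^ (j : ℕ) : ℤ) : ℂ) / p) := by
    rw [Finset.sum_comm]
    exact Finset.sum_congr rfl fun k _ => Finset.sum_comm
  rw [swap]
  have inner : ∀ k ∈ Q, ∀ m ∈ Q,
      ∑ ν ∈ Finset.Icc 1 p,
        (c k * Complex.exp (Complex.I * ∑ j, (m j : ℂ) * ((x j : ℝ) : ℂ))) *
          Complex.exp (2 * π * Complex.I * ν *
            ((∑ j, (k - m) j * (a : ℤ) ^ (j : ℕ) : ℤ) : ℂ) / p)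
      = if m = k then
          (c k * Complex.exp (Complex.I * ∑ j, (m j : ℂ) * ((x j : ℝ) : ℂ))) * p
        else 0 := by
    intro k hk m hm
    rw [← Finset.mul_sum, geomsum p hp0]
    by_cases hkm : m = k
    · subst hkm
      simp
    · rw [if_neg hkm, if_neg, mul_zero]
      apply ha (k - m)
      · exact Finset.mem_image.mpr ⟨(k, m), Finset.mem_product.mpr ⟨hk, hm⟩, rfl⟩
      · intro h0
        apply hkm
        have := sub_eq_zero.mp h0
        exact this.symm
  calc (1 / (p : ℂ)) * ∑ k ∈ Q, ∑ m ∈ Q, ∑ ν ∈ Finset.Icc 1 p,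
        (c k * Complex.exp (Complex.I * ∑ j, (m j : ℂ) * ((x j : ℝ) : ℂ))) *
          Complex.exp (2 * π * Complex.I * ν *
            ((∑ j, (k - m) j * (a : ℤ) ^ (j : ℕ) : ℤ) : ℂ) / p)
      = (1 / (p : ℂ)) * ∑ k ∈ Q,
          (c k * Complex.exp (Complex.I * ∑ j, (k j : ℂ) * ((x j : ℝ) : ℂ))) * p := by
        congr 1
        refine Finset.sum_congr rfl fun k hk => ?_
        rw [Finset.sum_congr rfl fun m hm => inner k hk m hm]
        rw [Finset.sum_ite_eq' Q k]
        simp [hk]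
    _ = trigSum Q c x := by
        rw [trigSum, Finset.mul_sum]
        refine Finset.sum_congr rfl fun k _ => ?_
        field_simp


end
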